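/- If 1 < x < e^{1/e}, then the equation x^y = y has exactly two real solutions y; both solutions satisfy y > 1. -/

import Mathlib

open Real Set

-- strict convexity of g
lemma aux_strictconv (c : ℝ) (hc : c ≠ 0) :
    StrictConvexOn ℝ Set.univ (fun y => Real.exp (c*y) - y) := by
  have hd : deriv (fun y => Real.exp (c*y) - y) = fun y => Real.exp (c*y) * c - 1 := by
    funext z
    have h1 : HasDerivAt (fun y : ℝ => Real.exp (c*y)) (Real.exp (c*z) * c) z := by
      simpa [Function.comp_def] using (Real.hasDerivAt_exp (c*z)).comp z ((hasDerivAt_id z).const_mul c)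
    exact (h1.sub (hasDerivAt_id z)).deriv
  apply strictConvexOn_of_deriv2_pos convex_univ
    (Continuous.continuousOn (by continuity))
  intro y _
  have hd2 : deriv (deriv (fun y => Real.exp (c*y) - y)) y = Real.exp (c*y) * c * c := by
    rw [hd]
    have h1 : HasDerivAt (fun z : ℝ => Real.exp (c*z)) (Real.exp (c*y) * c) y := by
      simpa [Function.comp_def] using (Real.hasDerivAt_exp (c*y)).comp y ((hasDerivAt_id y).const_mul c)
    have h2 : HasDerivAt (fun z : ℝ => Real.exp (c*z) * c - 1) (Real.exp (c*y) * c * c) y :=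
      ((h1.mul_const c).sub_const 1)
    exact h2.deriv
  simp only [Function.iterate_succ, Function.iterate_zero, Function.comp_apply, id_eq]
  rw [hd2]
  have h3 : Real.exp (c*y) * c * c = Real.exp (c*y) * c^2 := by ring
  rw [h3]
  positivity

lemma aux_mid {g : ℝ → ℝ} (h : StrictConvexOn ℝ Set.univ g) {p q r : ℝ}
    (hpq : p < q) (hqr : q < r) (hp : g p = 0) (hr : g r = 0) : g q < 0 := by
  have hpr : p < r := hpq.trans hqr
  have hrp : (0:ℝ) < r - p := by linarith
  have ha : 0 < (r - q)/(r - p) := div_pos (by linarith) hrp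
  have hb : 0 < (q - p)/(r - p) := div_pos (by linarith) hrp
  have hab : (r - q)/(r - p) + (q - p)/(r - p) = 1 := by field_simp; ring
  have key := h.2 (Set.mem_univ p) (Set.mem_univ r) hpr.ne ha hb hab
  rw [hp, hr] at key
  have hq : ((r - q)/(r - p)) • p + ((q - p)/(r - p)) • r = q := by
    simp only [smul_eq_mul]
    field_simp
    ring
  rw [hq] at key
  simpa using key

theorem two_fixed_points_of_lt_exp_one_div_e
    (x : ℝ) (hx1 : 1 < x) (hx2 : x < Real.exp 1 ^ (1 / Real.exp 1)) :
    ∃ y₁ y₂ : ℝ, y₁ ≠ y₂ ∧ x ^ y₁ = y₁ ∧ x ^ y₂ = y₂ ∧ 1 < y₁ ∧ 1 < y₂ ∧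
      ∀ y : ℝ, x ^ y = y → y = y₁ ∨ y = y₂ := by
  set c := Real.log x with hc_def
  have hx0 : (0:ℝ) < x := by linarith
  have hc0 : 0 < c := Real.log_pos hx1
  have hee : Real.exp 1 ^ (1 / Real.exp 1) = Real.exp (1 / Real.exp 1) := by
    rw [Real.exp_one_rpow]
  have hc1 : c < 1 / Real.exp 1 := by
    have := Real.log_lt_log hx0 (hx2.trans_eq hee)
    rwa [Real.log_exp] at this
  have hce : c < 1 := by
    have h1 : (1:ℝ) / Real.exp 1 < 1 := by
      rw [div_lt_one (Real.exp_pos 1)]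
      linarith [Real.exp_one_gt_d9]
    linarith
  have hlogc : Real.log c < -1 := by
    have h1 : c < Real.exp (-1) := by rwa [Real.exp_neg, ← one_div]
    have := Real.log_lt_log hc0 h1
    rwa [Real.log_exp] at this
  set g : ℝ → ℝ := fun y => Real.exp (c*y) - y with hg_def
  have hconv : StrictConvexOn ℝ Set.univ g := aux_strictconv c hc0.ne'
  have hcont : Continuous g := by fun_prop
  have hsol : ∀ y : ℝ, x ^ y = y ↔ g y = 0 := by
    intro y
    rw [Real.rpow_def_of_pos hx0, ← hc_def, ← sub_eq_zero]
  have hgt1 : ∀ y : ℝ, g y = 0 → 1 < y := by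
    intro y hy
    have hy' : Real.exp (c*y) = y := by
      have h := hy
      simp only [hg_def] at h
      linarith
    have hy0 : 0 < y := hy' ▸ Real.exp_pos (c*y)
    have hcy : 0 < c * y := mul_pos hc0 hy0
    linarith [Real.add_one_le_exp (c*y)]
  set y₀ : ℝ := -Real.log c / c with hy0_def
  have hy01 : 1 < y₀ := by
    rw [hy0_def, lt_div_iff₀ hc0]
    linarith
  have hgy0 : g y₀ < 0 := by
    have h1 : c * y₀ = -Real.log c := by rw [hy0_def]; field_simp
    have h2 : Real.exp (c * y₀) = 1/c := by
      rw [h1, Real.exp_neg, Real.exp_log hc0, one_div]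
    show Real.exp (c * y₀) - y₀ < 0
    rw [h2, hy0_def]
    have h3 : 1/c - -Real.log c / c = (1 + Real.log c)/c := by ring
    rw [h3]
    exact div_neg_of_neg_of_pos (by linarith) hc0
  have hg1 : 0 < g 1 := by
    show 0 < Real.exp (c * 1) - 1
    rw [mul_one]
    linarith [Real.add_one_le_exp c]
  set Y : ℝ := 4 / c^2 with hY_def
  have hlc2 : -Real.log c ≤ 1/c - 1 := by
    have := Real.log_le_sub_one_of_pos (x := 1/c) (by positivity)
    rw [Real.log_div one_ne_zero hc0.ne', Real.log_one] at this
    linarith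
  have hy0Y : y₀ < Y := by
    rw [hy0_def, hY_def, div_lt_div_iff₀ hc0 (by positivity)]
    have h2 : (1/c) * c = 1 := by field_simp
    nlinarith [mul_le_mul_of_nonneg_right hlc2 hc0.le,
      mul_le_mul_of_nonneg_right (mul_le_mul_of_nonneg_right hlc2 hc0.le) hc0.le,
      mul_pos hc0 hc0]
  have hgY : 0 < g Y := by
    show 0 < Real.exp (c * Y) - Y
    have h1 : c * Y = 4/c := by rw [hY_def]; field_simp
    rw [h1, hY_def]
    have h2 : 2/c + 1 ≤ Real.exp (2/c) := Real.add_one_le_exp _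
    have h3 : Real.exp (4/c) = Real.exp (2/c) * Real.exp (2/c) := by
      rw [← Real.exp_add]; ring_nf
    have h4 : (2/c)*(2/c) = 4/c^2 := by field_simp; ring
    have h5 : 0 < 2/c := by positivity
    nlinarith
  obtain ⟨y₁, hy₁mem, hy₁⟩ : ∃ y₁ ∈ Set.Icc (1:ℝ) y₀, g y₁ = 0 := by
    have h := intermediate_value_Icc' hy01.le hcont.continuousOn
    have h0 : (0:ℝ) ∈ Set.Icc (g y₀) (g 1) := ⟨hgy0.le, hg1.le⟩
    obtain ⟨z, hz, hz0⟩ := h h0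
    exact ⟨z, hz, hz0⟩
  obtain ⟨y₂, hy₂mem, hy₂⟩ : ∃ y₂ ∈ Set.Icc y₀ Y, g y₂ = 0 := by
    have h := intermediate_value_Icc hy0Y.le hcont.continuousOn
    have h0 : (0:ℝ) ∈ Set.Icc (g y₀) (g Y) := ⟨hgy0.le, hgY.le⟩
    obtain ⟨z, hz, hz0⟩ := h h0
    exact ⟨z, hz, hz0⟩
  have hy₁lt : y₁ < y₀ := lt_of_le_of_ne hy₁mem.2 (fun h => by rw [h] at hy₁; linarith)
  have hy₂gt : y₀ < y₂ := lt_of_le_of_ne hy₂mem.1 (fun h => absurd hy₂ (by rw [← h]; exact hgy0.ne))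
  have h12 : y₁ < y₂ := hy₁lt.trans hy₂gt
  refine ⟨y₁, y₂, h12.ne, (hsol y₁).mpr hy₁, (hsol y₂).mpr hy₂, hgt1 y₁ hy₁, hgt1 y₂ hy₂, ?_⟩
  intro y hy
  rw [hsol y] at hy
  by_contra hne
  push_neg at hne
  obtain ⟨hne1, hne2⟩ := hne
  rcases lt_trichotomy y y₁ with h | h | h
  · have := aux_mid hconv h h12 hy hy₂
    linarith
  · exact hne1 h
  · rcases lt_trichotomy y y₂ with h' | h' | h'
    · have := aux_mid hconv h h' hy₁ hy₂
      linarith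
    · exact hne2 h'
    · have := aux_mid hconv h12 h' hy₁ hy
      linarith
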